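/- arXiv:0802.4294 — 3 statements merged into one kernel-verified Lean document; each statement's English description precedes it below -/
import Mathlib

section
/- Let G = ⟨a,b⟩ be the free group of rank 2, let K₂ = ℤ/2ℤ with uniform measure κ₂, and K₄ = ℤ/2ℤ × ℤ/2ℤ with uniform measure κ₄. The map φ : K₂^G → K₄^G defined by φ(x)(g) = (x(g)+x(ga), x(g)+x(gb)) is G-equivariant and pushes the product measure κ₂^G forward to κ₄^G. Hence the Bernoulli shift of entropy log 2 factors onto the Bernoulli shift of entropy log 4. -/
open MeasureTheory
open scoped ENNReal

namespace Bowen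

/-- The Bernoulli shift action: `(g • x)(f) = x(g⁻¹ f)`. -/
def shift {G : Type*} [Group G] {K : Type*} (g : G) (x : G → K) : G → K :=
  fun f => x (g⁻¹ * f)

noncomputable instance : MeasurableSpace (ZMod 2) := ⊤

/-- The Ornstein–Weiss map `φ(x)(g) = (x(g) + x(ga), x(g) + x(gb))` over the rank 2 free
group `G = ⟨a,b⟩`, with `a, b` the two free generators. -/
def owMap (x : FreeGroup (Fin 2) → ZMod 2) : FreeGroup (Fin 2) → ZMod 2 × ZMod 2 :=
  fun g => (x g + x (g * FreeGroup.of 0), x g + x (g * FreeGroup.of 1))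

end Bowen

open Bowen

/-! ### Auxiliary material -/

namespace OWAux

/-! #### Free group word lemmas -/

section FG

open FreeGroup List

variable {α : Type*} [DecidableEq α]

lemma invRev_append (L M : List (α × Bool)) : invRev (L ++ M) = invRev M ++ invRev L := by
  simp [invRev]

lemma invRev_singleton (i : α) (b : Bool) : invRev [(i, b)] = [(i, !b)] := by
  simp [invRev]

/-- Reducing a reduced word with one extra letter appended. -/
lemma reduce_append_single (L : List (α × Bool)) (hL : reduce L = L) (i : α) :
    reduce (L ++ [(i, true)]) = L ++ [(i, true)] ∨
      (L.getLast? = some (i, false) ∧ reduce (L ++ [(i, true)]) = L.dropLast) := by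
  have hinv : reduce (invRev (L ++ [(i, true)])) = invRev (reduce (L ++ [(i, true)])) :=
    reduce_invRev
  have h1 : invRev (L ++ [(i, true)]) = (i, false) :: invRev L := by
    rw [invRev_append, invRev_singleton]; rfl
  have hred : reduce (invRev L) = invRev L := by rw [reduce_invRev, hL]
  rw [h1] at hinv
  cases hM : invRev L with
  | nil =>
    have hLnil : L = [] := by
      have := congrArg List.length hM
      simpa using List.length_eq_zero_iff.mp (by simpa using this)
    left
    subst hLnil
    simp [reduce_singleton]
  | cons hd tl =>
    have hLeq : L = invRev tl ++ [(hd.1, !hd.2)] := by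
      have := congrArg invRev hM
      rw [invRev_invRev] at this
      rw [this]
      simp [invRev]
    have hredc : reduce ((i, false) :: invRev L) =
        if (i, false).1 = hd.1 ∧ (i, false).2 = !hd.2 then tl
          else (i, false) :: hd :: tl := by
      rw [reduce.cons, hred, hM]
    by_cases hc : i = hd.1 ∧ hd.2 = true
    · right
      have hcond : (i, false).1 = hd.1 ∧ ((i, false).2 : Bool) = !hd.2 := by
        simp [hc.1, hc.2]
      rw [hredc, if_pos hcond] at hinv
      constructor
      · rw [hLeq]
        have : hd = (hd.1, hd.2) := rfl
        simp [hc.1, hc.2]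
      · have h2 : reduce (L ++ [(i, true)]) = invRev tl := by
          have := congrArg invRev hinv
          rw [invRev_invRev] at this
          exact this.symm
        rw [h2, hLeq]
        simp
    · left
      have hcond : ¬((i, false).1 = hd.1 ∧ ((i, false).2 : Bool) = !hd.2) := by
        intro ⟨h1', h2'⟩
        exact hc ⟨h1', by simpa using h2'.symm⟩
      rw [hredc, if_neg hcond] at hinv
      have := congrArg invRev hinv
      rw [invRev_invRev] at this
      rw [← this]
      have : invRev ((i, false) :: hd :: tl) = invRev (hd :: tl) ++ [(i, true)] := by
        show invRev ([(i,false)] ++ (hd :: tl)) = _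
        rw [invRev_append, invRev_singleton]
        rfl
      rw [this, ← hM, invRev_invRev]

/-- Multiplying by a generator: either the word extends or the last letter cancels. -/
lemma toWord_mul_of (g : FreeGroup α) (i : α) :
    (g * of i).toWord = g.toWord ++ [(i, true)] ∨
      (g.toWord.getLast? = some (i, false) ∧ (g * of i).toWord = g.toWord.dropLast) := by
  have h : g * of i = mk (g.toWord ++ [(i, true)]) := by
    conv_lhs => rw [← mk_toWord (x := g), ← mk_toWord (x := of i)]
    rw [mul_mk, toWord_of]
  rw [h, toWord_mk]
  exact reduce_append_single g.toWord g.reduce_toWord i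

lemma norm_mul_of_ext {g : FreeGroup α} {i : α}
    (h : (g * of i).toWord = g.toWord ++ [(i, true)]) :
    norm (g * of i) = norm g + 1 := by
  rw [FreeGroup.norm, h, List.length_append, List.length_singleton, FreeGroup.norm]

lemma norm_mul_of_cancel {g : FreeGroup α} {i : α}
    (h1 : g.toWord.getLast? = some (i, false))
    (h2 : (g * of i).toWord = g.toWord.dropLast) :
    norm (g * of i) + 1 = norm g := by
  have hne : g.toWord ≠ [] := by
    intro h; rw [h] at h1; simp at h1
  rw [FreeGroup.norm, h2, List.length_dropLast, FreeGroup.norm]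
  have := List.length_pos_iff.mpr hne
  omega

/-- Uniqueness of extensions. -/
lemma ext_inj {g g' : FreeGroup α} {i j : α}
    (h : (g * of i).toWord = g.toWord ++ [(i, true)])
    (h' : (g' * of j).toWord = g'.toWord ++ [(j, true)])
    (heq : g * of i = g' * of j) : g = g' := by
  rw [heq, h'] at h
  have := List.append_inj' h.symm rfl
  exact toWord_injective this.1

end FG

/-! #### Cylinder sets and uniqueness of measures -/

instance : MeasurableSingletonClass (ZMod 2) :=
  ⟨fun _ => MeasurableSpace.measurableSet_top⟩

instance : MeasurableAdd₂ (ZMod 2) :=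
  ⟨measurable_of_countable _⟩

section Cyl

variable {G : Type*} {K : Type*} [MeasurableSpace K] [Countable K] [MeasurableSingletonClass K]

/-- Cylinder set. -/
def cyl (F : Finset G) (y : G → K) : Set (G → K) := {x | ∀ g ∈ F, x g = y g}

omit [Countable K] in
lemma measurableSet_cyl (F : Finset G) (y : G → K) : MeasurableSet (cyl F y) := by
  have : cyl F y = ⋂ g ∈ F, (fun x : G → K => x g) ⁻¹' {y g} := by
    ext x; simp [cyl]
  rw [this]
  exact MeasurableSet.biInter F.countable_toSet fun g _ =>
    (measurable_pi_apply g) (measurableSet_singleton _)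

omit [MeasurableSpace K] [Countable K] [MeasurableSingletonClass K] in
lemma cyl_empty (y : G → K) : cyl (∅ : Finset G) y = Set.univ := by
  ext x; simp [cyl]

lemma generateFrom_cyl :
    (MeasurableSpace.pi : MeasurableSpace (G → K)) =
      MeasurableSpace.generateFrom {s | ∃ F y, s = cyl F y} := by
  apply le_antisymm
  · refine iSup_le fun g => ?_
    rintro t ⟨s, _, rfl⟩
    have : (fun x : G → K => x g) ⁻¹' s = ⋃ k ∈ s, cyl {g} (fun _ => k) := by
      ext x; simp [cyl]
    rw [this]
    exact MeasurableSet.biUnion s.to_countable fun k _ =>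
      MeasurableSpace.measurableSet_generateFrom ⟨{g}, fun _ => k, rfl⟩
  · exact MeasurableSpace.generateFrom_le (by rintro s ⟨F, y, rfl⟩; exact measurableSet_cyl F y)

omit [MeasurableSpace K] [Countable K] [MeasurableSingletonClass K] in
lemma isPiSystem_cyl : IsPiSystem {s : Set (G → K) | ∃ F y, s = cyl F y} := by
  classical
  rintro s ⟨F, y, rfl⟩ t ⟨F', y', rfl⟩ hne
  obtain ⟨x₀, hx₀s, hx₀t⟩ := hne
  refine ⟨F ∪ F', fun g => if g ∈ F then y g else y' g, ?_⟩
  ext x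
  simp only [cyl, Set.mem_inter_iff, Set.mem_setOf_eq, Finset.mem_union]
  constructor
  · rintro ⟨h1, h2⟩ g hg
    by_cases hgF : g ∈ F
    · simp [hgF, h1 g hgF]
    · simp [hgF, h2 g (hg.resolve_left hgF)]
  · intro h
    constructor
    · intro g hg
      have := h g (Or.inl hg)
      simpa [hg] using this
    · intro g hg
      have := h g (Or.inr hg)
      by_cases hgF : g ∈ F
      · rw [if_pos hgF] at this
        rw [this, ← hx₀s g hgF, hx₀t g hg]
      · rwa [if_neg hgF] at this

/-- Two finite measures agreeing on cylinders agree. -/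
lemma ext_of_cyl [Nonempty K] (μ ν : Measure (G → K)) (huniv : μ Set.univ = 1)
    (h : ∀ (F : Finset G) (y : G → K), μ (cyl F y) = ν (cyl F y)) : μ = ν := by
  have : IsFiniteMeasure μ := ⟨by rw [huniv]; exact ENNReal.one_lt_top⟩
  refine ext_of_generate_finite _ generateFrom_cyl isPiSystem_cyl ?_ ?_
  · rintro s ⟨F, y, rfl⟩; exact h F y
  · have := h ∅ (fun _ => Classical.arbitrary K)
    rwa [cyl_empty] at this

end Cyl

/-! #### The halving lemma -/

section Flip

abbrev FG := FreeGroup (Fin 2)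
abbrev Om := FG → ZMod 2

variable (μ : Measure Om)
  (h₂ : ∀ (F : Finset FG) (y : FG → ZMod 2), μ {x | ∀ g ∈ F, x g = y g} = (2 : ℝ≥0∞)⁻¹ ^ F.card)

/-- Flip coordinate `v`. -/
noncomputable def flipc (v : FG) (x : Om) : Om := Function.update x v (x v + 1)

lemma measurable_flipc (v : FG) : Measurable (flipc v) := by
  rw [measurable_pi_iff]
  intro g
  classical
  by_cases h : g = v
  · subst h
    have : (fun x : Om => flipc g x g) = fun x => x g + 1 := by
      ext x; simp [flipc]
    rw [this]
    exact (measurable_of_countable (fun k : ZMod 2 => k + 1)).comp (measurable_pi_apply g)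
  · have : (fun x : Om => flipc v x g) = fun x => x g := by
      ext x; simp [flipc, Function.update_of_ne h]
    rw [this]
    exact measurable_pi_apply g

include h₂ in
lemma map_flipc (v : FG) : μ.map (flipc v) = μ := by
  classical
  have hμcyl : ∀ (F : Finset FG) (y : FG → ZMod 2), μ (cyl F y) = (2 : ℝ≥0∞)⁻¹ ^ F.card :=
    fun F y => h₂ F y
  refine ext_of_cyl _ _ ?_ ?_
  · rw [Measure.map_apply (measurable_flipc v) MeasurableSet.univ]
    have := hμcyl ∅ (fun _ => 0)
    rwa [cyl_empty, Finset.card_empty, pow_zero] at this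
  · intro F y
    rw [Measure.map_apply (measurable_flipc v) (measurableSet_cyl F y)]
    have : flipc v ⁻¹' cyl F y = cyl F (Function.update y v (y v + 1)) := by
      ext x
      simp only [cyl, Set.mem_preimage, Set.mem_setOf_eq]
      refine forall₂_congr fun g hg => ?_
      by_cases hgv : g = v
      · subst hgv
        simp only [flipc, Function.update_self]
        have hzz : ∀ p q : ZMod 2, p + 1 = q ↔ p = q + 1 := by decide
        exact hzz _ _
      · simp [flipc, Function.update_of_ne hgv]
    rw [this, hμcyl, hμcyl]

include h₂ in
/-- The key "conditioning" lemma: adding one fresh linear constraint halves the measure. -/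
lemma half (A : Set Om) (hA : MeasurableSet A) (v u : FG) (huv : u ≠ v) (c : ZMod 2)
    (hAv : ∀ (x : Om) (t : ZMod 2), x ∈ A ↔ Function.update x v t ∈ A) :
    μ (A ∩ {x | x v = x u + c}) = μ A / 2 := by
  classical
  have hB' : MeasurableSet {x : Om | x v = x u + c + 1} := by
    have : {x : Om | x v = x u + c + 1} =
        (fun x : Om => (x v, x u)) ⁻¹' {p : ZMod 2 × ZMod 2 | p.1 = p.2 + c + 1} := rfl
    rw [this]
    exact (((measurable_pi_apply v)).prodMk (measurable_pi_apply u))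
      ((Set.toFinite _).measurableSet)
  have hBmeas : MeasurableSet {x : Om | x v = x u + c} := by
    have : {x : Om | x v = x u + c} =
        (fun x : Om => (x v, x u)) ⁻¹' {p : ZMod 2 × ZMod 2 | p.1 = p.2 + c} := rfl
    rw [this]
    exact (((measurable_pi_apply v)).prodMk (measurable_pi_apply u))
      ((Set.toFinite _).measurableSet)
  set B := A ∩ {x | x v = x u + c} with hBdef
  set B' := A ∩ {x | x v = x u + c + 1} with hB'def
  have hunion : B ∪ B' = A := by
    ext x
    simp only [hBdef, hB'def, Set.mem_union, Set.mem_inter_iff, Set.mem_setOf_eq]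
    have : x v = x u + c ∨ x v = x u + c + 1 := by
      have : ∀ p q : ZMod 2, p = q ∨ p = q + 1 := by decide
      exact this _ _
    tauto
  have hdisj : Disjoint B B' := by
    rw [Set.disjoint_iff]
    rintro x ⟨⟨-, h1⟩, -, h2⟩
    simp only [Set.mem_setOf_eq] at h1 h2
    rw [h1] at h2
    have : ∀ q : ZMod 2, q ≠ q + 1 := by decide
    exact (this _ h2).elim
  have hpre : flipc v ⁻¹' B' = B := by
    ext x
    simp only [hB'def, hBdef, Set.mem_preimage, Set.mem_inter_iff, Set.mem_setOf_eq]
    have h1 : flipc v x ∈ A ↔ x ∈ A := (hAv x (x v + 1)).symm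
    have h2 : flipc v x v = x v + 1 := Function.update_self _ _ _
    have h3 : flipc v x u = x u := Function.update_of_ne huv _ _
    rw [h1, h2, h3]
    have hzz : ∀ p q : ZMod 2, p + 1 = q + 1 ↔ p = q := by decide
    rw [hzz]
  have hm : μ B' = μ B := by
    conv_lhs => rw [← map_flipc μ h₂ v]
    rw [Measure.map_apply (measurable_flipc v) (hA.inter hB'), hpre]
  have hsum : μ A = μ B + μ B' := by
    rw [← hunion, measure_union hdisj (hA.inter hB')]
  rw [hm, ← two_mul] at hsum
  rw [hsum]
  exact (ENNReal.eq_div_iff two_ne_zero ENNReal.ofNat_ne_top).mpr rfl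

end Flip

/-! #### The constraint events and the main computation -/

section Main

open FreeGroup

/-- The preimage of a cylinder set under the Ornstein–Weiss map. -/
def E (F : Finset FG) (c : FG → ZMod 2 × ZMod 2) : Set Om :=
  {x | ∀ g ∈ F, x (g * of 0) = x g + (c g).1 ∧ x (g * of 1) = x g + (c g).2}

lemma measurableSet_eqset (p q : FG) (k : ZMod 2) :
    MeasurableSet {x : Om | x p = x q + k} := by
  have : {x : Om | x p = x q + k} =
      (fun x : Om => (x p, x q)) ⁻¹' {r : ZMod 2 × ZMod 2 | r.1 = r.2 + k} := rfl
  rw [this]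
  exact (((measurable_pi_apply p)).prodMk (measurable_pi_apply q))
    ((Set.toFinite _).measurableSet)

lemma measurableSet_E (F : Finset FG) (c : FG → ZMod 2 × ZMod 2) :
    MeasurableSet (E F c) := by
  have : E F c = ⋂ g ∈ F,
      ({x : Om | x (g * of 0) = x g + (c g).1} ∩ {x : Om | x (g * of 1) = x g + (c g).2}) := by
    ext x; simp [E]
  rw [this]
  exact MeasurableSet.biInter F.countable_toSet fun g _ =>
    (measurableSet_eqset _ _ _).inter (measurableSet_eqset _ _ _)

lemma eqset_update {p q v : FG} (hp : p ≠ v) (hq : q ≠ v) (k : ZMod 2) (x : Om) (t : ZMod 2) :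
    (x ∈ {x : Om | x p = x q + k}) ↔ Function.update x v t ∈ {x : Om | x p = x q + k} := by
  simp [Function.update_of_ne hp, Function.update_of_ne hq]

/-- Invariance of the event `E F c` under changing a fresh coordinate. -/
lemma E_update {F : Finset FG} {c : FG → ZMod 2 × ZMod 2} {v : FG}
    (hfresh : ∀ g ∈ F, v ≠ g ∧ v ≠ g * of 0 ∧ v ≠ g * of 1) (x : Om) (t : ZMod 2) :
    x ∈ E F c ↔ Function.update x v t ∈ E F c := by
  simp only [E, Set.mem_setOf_eq]
  refine forall₂_congr fun g hg => ?_
  obtain ⟨h1, h2, h3⟩ := hfresh g hg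
  rw [Function.update_of_ne (Ne.symm h1), Function.update_of_ne (Ne.symm h2),
    Function.update_of_ne (Ne.symm h3)]

end Main


/-! #### Freshness lemmas -/

section Fresh

open FreeGroup

lemma g0_ne_mul (g₀ : FG) (i : Fin 2) : g₀ ≠ g₀ * of i := by
  intro h
  exact of_ne_one i (left_eq_mul.mp h)

lemma mul_of_ne (g₀ : FG) : g₀ * of 0 ≠ g₀ * of 1 := by
  intro h
  exact absurd (of_injective (mul_left_cancel h)) (by decide)

lemma fresh_ext {F : Finset FG} {g₀ : FG} (hmax : ∀ g ∈ F, norm g ≤ norm g₀)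
    {i : Fin 2} (hext : (g₀ * of i).toWord = g₀.toWord ++ [(i, true)]) :
    ∀ g' ∈ F.erase g₀, g₀ * of i ≠ g' ∧ g₀ * of i ≠ g' * of 0 ∧ g₀ * of i ≠ g' * of 1 := by
  intro g' hg'
  have hne := Finset.ne_of_mem_erase hg'
  have hnorm := hmax g' (Finset.mem_of_mem_erase hg')
  have hnormext := norm_mul_of_ext hext
  have haux : ∀ j : Fin 2, g₀ * of i ≠ g' * of j := by
    intro j heq
    rcases toWord_mul_of g' j with hext' | ⟨hl', hc'⟩
    · exact hne (ext_inj hext hext' heq).symm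
    · have h1 := norm_mul_of_cancel hl' hc'
      rw [heq] at hnormext
      omega
  refine ⟨?_, haux 0, haux 1⟩
  intro h
  rw [h] at hnormext
  omega

lemma fresh_can {F : Finset FG} {g₀ : FG} (hmax : ∀ g ∈ F, norm g ≤ norm g₀)
    {i : Fin 2} (hlast : g₀.toWord.getLast? = some (i, false)) :
    ∀ g' ∈ F.erase g₀, g₀ ≠ g' ∧ g₀ ≠ g' * of 0 ∧ g₀ ≠ g' * of 1 := by
  intro g' hg'
  have hne := Finset.ne_of_mem_erase hg'
  have hnorm := hmax g' (Finset.mem_of_mem_erase hg')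
  have haux : ∀ j : Fin 2, g₀ ≠ g' * of j := by
    intro j heq
    rcases toWord_mul_of g' j with hext' | ⟨hl', hc'⟩
    · have := hlast
      rw [heq, hext', List.getLast?_concat] at this
      simp at this
    · have h1 := norm_mul_of_cancel hl' hc'
      have h2 : norm g₀ = norm (g' * of j) := by rw [heq]
      omega
  exact ⟨Ne.symm hne, haux 0, haux 1⟩

end Fresh

/-! #### The main computation -/

section MainComp

open FreeGroup

lemma arith_step (n : ℕ) : ((4 : ℝ≥0∞)⁻¹ ^ n) / 2 / 2 = (4 : ℝ≥0∞)⁻¹ ^ (n + 1) := by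
  rw [pow_succ, div_eq_mul_inv, div_eq_mul_inv, mul_assoc]
  congr 1
  rw [← ENNReal.mul_inv (Or.inl two_ne_zero) (Or.inr two_ne_zero)]
  norm_num

lemma eqset_swap (p q : FG) (k : ZMod 2) :
    {x : Om | x p = x q + k} = {x : Om | x q = x p + k} := by
  ext x
  simp only [Set.mem_setOf_eq]
  have : ∀ a b r : ZMod 2, a = b + r ↔ b = a + r := by decide
  exact this _ _ _

lemma E_measure (μ : Measure Om)
    (h₂ : ∀ (F : Finset FG) (y : FG → ZMod 2),
      μ {x | ∀ g ∈ F, x g = y g} = (2 : ℝ≥0∞)⁻¹ ^ F.card) :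
    ∀ (F : Finset FG) (c : FG → ZMod 2 × ZMod 2), μ (E F c) = (4 : ℝ≥0∞)⁻¹ ^ F.card := by
  intro F
  induction F using Finset.strongInduction with
  | _ F IH =>
  intro c
  rcases F.eq_empty_or_nonempty with rfl | hne
  · have hE : E ∅ c = Set.univ := by ext x; simp [E]
    rw [hE, Finset.card_empty, pow_zero]
    have := h₂ ∅ (fun _ => 0)
    simpa using this
  obtain ⟨g₀, hg₀F, hmax⟩ := F.exists_max_image (fun g => norm g) hne
  set F' := F.erase g₀ with hF'
  have hss : F' ⊂ F := Finset.erase_ssubset hg₀F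
  have hcard : F.card = F'.card + 1 := by
    rw [hF', Finset.card_erase_of_mem hg₀F]
    have := Finset.card_pos.mpr hne
    omega
  have IH' := IH F' hss c
  have hdecomp : E F c = (E F' c ∩ {x : Om | x (g₀ * of 0) = x g₀ + (c g₀).1})
      ∩ {x : Om | x (g₀ * of 1) = x g₀ + (c g₀).2} := by
    ext x
    simp only [E, Set.mem_setOf_eq, Set.mem_inter_iff]
    constructor
    · intro h
      exact ⟨⟨fun g hg => h g (Finset.mem_of_mem_erase hg), (h g₀ hg₀F).1⟩, (h g₀ hg₀F).2⟩
    · rintro ⟨⟨h1, h2⟩, h3⟩ g hg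
      by_cases hgg : g = g₀
      · subst hgg; exact ⟨h2, h3⟩
      · exact h1 g (Finset.mem_erase.mpr ⟨hgg, hg⟩)
  have hEmeas := measurableSet_E F' c
  rcases toWord_mul_of g₀ (0 : Fin 2) with hext0 | ⟨hlast0, hcan0⟩
  · rcases toWord_mul_of g₀ (1 : Fin 2) with hext1 | ⟨hlast1, hcan1⟩
    · -- both letters extend the word
      rw [hdecomp,
        half μ h₂ _ (hEmeas.inter (measurableSet_eqset _ _ _)) (g₀ * of 1) g₀
          (g0_ne_mul g₀ 1) _
          (fun x t => and_congr (E_update (fresh_ext hmax hext1) x t)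
            (eqset_update (mul_of_ne g₀) (g0_ne_mul g₀ 1) _ x t)),
        half μ h₂ _ hEmeas (g₀ * of 0) g₀ (g0_ne_mul g₀ 0) _
          (fun x t => E_update (fresh_ext hmax hext0) x t),
        IH', hcard, arith_step]
    · -- letter 1 cancels, letter 0 extends
      rw [hdecomp, Set.inter_right_comm, eqset_swap,
        half μ h₂ _ (hEmeas.inter (measurableSet_eqset _ _ _)) (g₀ * of 0) g₀
          (g0_ne_mul g₀ 0) _
          (fun x t => and_congr (E_update (fresh_ext hmax hext0) x t)
            (eqset_update (g0_ne_mul g₀ 0) (fun h => mul_of_ne g₀ h.symm) _ x t)),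
        half μ h₂ _ hEmeas g₀ (g₀ * of 1) (fun h => g0_ne_mul g₀ 1 h.symm) _
          (fun x t => E_update (fresh_can hmax hlast1) x t),
        IH', hcard, arith_step]
  · rcases toWord_mul_of g₀ (1 : Fin 2) with hext1 | ⟨hlast1, hcan1⟩
    · -- letter 0 cancels, letter 1 extends
      rw [hdecomp, eqset_swap,
        half μ h₂ _ (hEmeas.inter (measurableSet_eqset _ _ _)) (g₀ * of 1) g₀
          (g0_ne_mul g₀ 1) _
          (fun x t => and_congr (E_update (fresh_ext hmax hext1) x t)
            (eqset_update (g0_ne_mul g₀ 1) (mul_of_ne g₀) _ x t)),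
        half μ h₂ _ hEmeas g₀ (g₀ * of 0) (fun h => g0_ne_mul g₀ 0 h.symm) _
          (fun x t => E_update (fresh_can hmax hlast0) x t),
        IH', hcard, arith_step]
    · -- both letters cancel: impossible
      rw [hlast0] at hlast1
      exact absurd hlast1 (by decide)

end MainComp

end OWAux

open OWAux FreeGroup

/-- the Ornstein–Weiss map `φ : K₂^G → K₄^G`, where `G` is the rank 2 free
group, `K₂ = ℤ/2` with uniform measure and `K₄ = ℤ/2 × ℤ/2` with uniform measure, is
measurable, `G`-equivariant, and pushes the product measure `κ₂^G` forward to `κ₄^G`.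
Hence the Bernoulli shift of entropy `log 2` factors onto that of entropy `log 4`.
(The product measures are characterized by their values on cylinder sets.) -/
theorem ornstein_weiss_factor
    (μ₂ : Measure (FreeGroup (Fin 2) → ZMod 2))
    (μ₄ : Measure (FreeGroup (Fin 2) → ZMod 2 × ZMod 2))
    (h₂ : ∀ (F : Finset (FreeGroup (Fin 2))) (y : FreeGroup (Fin 2) → ZMod 2),
      μ₂ {x | ∀ g ∈ F, x g = y g} = (2 : ℝ≥0∞)⁻¹ ^ F.card)
    (h₄ : ∀ (F : Finset (FreeGroup (Fin 2))) (y : FreeGroup (Fin 2) → ZMod 2 × ZMod 2),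
      μ₄ {x | ∀ g ∈ F, x g = y g} = (4 : ℝ≥0∞)⁻¹ ^ F.card) :
    Measurable owMap ∧ (∀ (g : FreeGroup (Fin 2)) (x : FreeGroup (Fin 2) → ZMod 2),
      owMap (shift g x) = shift g (owMap x)) ∧ Measure.map owMap μ₂ = μ₄ := by
  have hmeas : Measurable owMap := by
    rw [measurable_pi_iff]
    intro g
    show Measurable fun x : FreeGroup (Fin 2) → ZMod 2 =>
      (x g + x (g * FreeGroup.of 0), x g + x (g * FreeGroup.of 1))
    exact Measurable.prodMk
      ((measurable_of_countable (fun p : ZMod 2 × ZMod 2 => p.1 + p.2)).comp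
        (f := fun x : FreeGroup (Fin 2) → ZMod 2 => (x g, x (g * FreeGroup.of 0)))
        ((measurable_pi_apply g).prodMk (measurable_pi_apply (g * FreeGroup.of 0))))
      ((measurable_of_countable (fun p : ZMod 2 × ZMod 2 => p.1 + p.2)).comp
        (f := fun x : FreeGroup (Fin 2) → ZMod 2 => (x g, x (g * FreeGroup.of 1)))
        ((measurable_pi_apply g).prodMk (measurable_pi_apply (g * FreeGroup.of 1))))
  refine ⟨hmeas, ?_, ?_⟩
  · intro g x
    funext f
    simp [owMap, shift, mul_assoc]
  · refine ext_of_cyl _ _ ?_ ?_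
    · rw [Measure.map_apply hmeas MeasurableSet.univ, Set.preimage_univ]
      have := h₂ ∅ (fun _ => 0)
      simpa using this
    · intro F y
      rw [Measure.map_apply hmeas (measurableSet_cyl F y)]
      have hpre : owMap ⁻¹' cyl F y = E F y := by
        ext x
        simp only [cyl, E, Set.mem_preimage, Set.mem_setOf_eq]
        refine forall₂_congr fun g hg => ?_
        show (x g + x (g * FreeGroup.of 0), x g + x (g * FreeGroup.of 1)) = y g ↔ _
        rw [Prod.ext_iff]
        have hz : ∀ p q r : ZMod 2, p + q = r ↔ q = p + r := by decide
        rw [hz, hz]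
      rw [hpre, E_measure μ₂ h₂ F y]
      exact (h₄ F y).symm
end

section
/- The Ornstein–Weiss map φ : (ℤ/2ℤ)^G → (ℤ/2ℤ × ℤ/2ℤ)^G, φ(x)(g) = (x(g)+x(ga), x(g)+x(gb)), where G = ⟨a,b⟩ is free of rank 2, is surjective (every element of the codomain has a preimage). -/
namespace OWAux

abbrev G := FreeGroup (Fin 2)

/-- Semidirect-product-style group carrier. -/
def Gam : Type := G × (G → ZMod 2)

instance : Group Gam where
  mul p q := (p.1 * q.1, p.2 + fun h => q.2 (h * p.1))
  one := ((1 : G), 0)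
  inv p := (p.1⁻¹, fun h => - p.2 (h * p.1⁻¹))
  mul_assoc p q r := by
    show (_, _) = (_, _)
    refine Prod.ext (mul_assoc _ _ _) ?_
    funext h
    show (p.2 + fun h => q.2 (h * p.1)) h + r.2 (h * (p.1 * q.1)) =
      p.2 h + ((q.2 + fun h' => r.2 (h' * q.1)) (h * p.1))
    simp [mul_assoc, add_assoc]
  one_mul p := by
    show (_, _) = p
    refine Prod.ext (one_mul _) ?_
    funext h
    show (0 : G → ZMod 2) h + p.2 (h * 1) = p.2 h
    simp
  mul_one p := by
    show (_, _) = p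
    refine Prod.ext (mul_one _) ?_
    funext h
    show p.2 h + (0 : G → ZMod 2) (h * p.1) = p.2 h
    simp
  inv_mul_cancel p := by
    show (_, _) = ((1 : G), (0 : G → ZMod 2))
    refine Prod.ext (inv_mul_cancel _) ?_
    funext h
    show -p.2 (h * p.1⁻¹) + p.2 (h * p.1⁻¹) = 0
    exact neg_add_cancel _

@[simp] lemma snd_mul (p q : Gam) : (p * q).2 = p.2 + fun h => q.2 (h * p.1) := rfl
@[simp] lemma fst_mul (p q : Gam) : (p * q).1 = p.1 * q.1 := rfl
@[simp] lemma fst_one : (1 : Gam).1 = 1 := rfl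

/-- Projection onto the first factor is a homomorphism. -/
def fstHom : Gam →* G where
  toFun := Prod.fst
  map_one' := rfl
  map_mul' := fun _ _ => rfl

/-- The lift determined by `y`. -/
def Phi (y : G → ZMod 2 × ZMod 2) : G →* Gam :=
  FreeGroup.lift fun i =>
    ((FreeGroup.of i : G), fun h => if i = 0 then (y h).1 else (y h).2)

lemma fst_Phi (y : G → ZMod 2 × ZMod 2) (g : G) : (Phi y g).1 = g := by
  have : (fstHom.comp (Phi y)) = MonoidHom.id G := by
    apply FreeGroup.ext_hom
    intro i
    exact congrArg Prod.fst (FreeGroup.lift_apply_of (β := Gam) (f := fun i : Fin 2 =>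
      ((FreeGroup.of i : G), fun h => if i = 0 then (y h).1 else (y h).2)) (x := i))
  calc (Phi y g).1 = (fstHom.comp (Phi y)) g := rfl
    _ = g := by rw [this]; rfl

end OWAux

/-- the Ornstein–Weiss map `φ : (ℤ/2)^G → (ℤ/2 × ℤ/2)^G`, `G` the rank 2
free group, is surjective: every element of the codomain has a preimage. -/
theorem ornstein_weiss_surjective : Function.Surjective Bowen.owMap := by
  intro y
  refine ⟨fun g => (OWAux.Phi y g).2 1, ?_⟩
  funext g
  have key : ∀ i : Fin 2, (OWAux.Phi y (g * FreeGroup.of i)).2 1 =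
      (OWAux.Phi y g).2 1 + (if i = 0 then (y g).1 else (y g).2) := by
    intro i
    rw [map_mul, OWAux.snd_mul]
    have hof : (OWAux.Phi y (FreeGroup.of i)).2 = fun h => if i = 0 then (y h).1 else (y h).2 := by
      exact congrArg Prod.snd (FreeGroup.lift_apply_of (β := OWAux.Gam) (f := fun i : Fin 2 =>
        ((FreeGroup.of i : OWAux.G), fun h => if i = 0 then (y h).1 else (y h).2))
        (x := i))
    simp only [Pi.add_apply, hof, one_mul, OWAux.fst_Phi]
  have h2 : ∀ u : ZMod 2, u + u = 0 := by decide
  have hc : ∀ (u c : ZMod 2), u + (u + c) = c := by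
    intro u c; rw [← add_assoc, h2, zero_add]
  show (_, _) = (_, _)
  refine Prod.ext ?_ ?_
  · show (OWAux.Phi y g).2 1 + (OWAux.Phi y (g * FreeGroup.of 0)).2 1 = (y g).1
    rw [key 0]; simpa using hc _ _
  · show (OWAux.Phi y g).2 1 + (OWAux.Phi y (g * FreeGroup.of 1)).2 1 = (y g).2
    rw [key 1]; simpa using hc _ _
end

section
/- Let G act on (X,μ), let α = {A₁,...,A_n} be a finite partition and β a finite generating partition. For every ε > 0 there is a finite M ⊆ G such that for all finite L ⊇ M, the atoms of β^L can be ordered B₁,...,B_{m_L} so that for some r and some f : {1,...,r} → {1,...,n}: μ(B_i ∩ A_{f(i)})/μ(B_i) ≥ 1-ε for i ≤ r, and μ(⋃_{i>r} B_i) < ε. -/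
open MeasureTheory Real
open scoped symmDiff ENNReal

namespace Bowen

variable {X : Type*} [MeasurableSpace X]

/-- Shannon entropy of the (countable) partition of `X` into fibers of `α`. -/
noncomputable def entropy {ι : Type*} (μ : Measure X) (α : X → ι) : ℝ :=
  ∑' i, Real.negMulLog (μ (α ⁻¹' {i})).toReal

/-- Conditional entropy `H(α|β)` of the fiber partition of `α` given that of `β`. -/
noncomputable def condEntropy {ι κ : Type*} (μ : Measure X) (α : X → ι) (β : X → κ) : ℝ :=
  ∑' p : ι × κ,
    -((μ (α ⁻¹' {p.1} ∩ β ⁻¹' {p.2})).toReal *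
      Real.log ((μ (α ⁻¹' {p.1} ∩ β ⁻¹' {p.2})).toReal / (μ (β ⁻¹' {p.2})).toReal))

/-- The Rokhlin distance `d(α,β) = H(α|β) + H(β|α)`. -/
noncomputable def rokhlin {ι κ : Type*} (μ : Measure X) (α : X → ι) (β : X → κ) : ℝ :=
  condEntropy μ α β + condEntropy μ β α

/-- A finite measurable partition, presented as a measurable map to `ℕ` with finite range. -/
def IsFinPart (α : X → ℕ) : Prop := Measurable α ∧ (Set.range α).Finite

/-- `α` refines `β` (mod null sets): `β` factors a.e. through `α`. -/
def RefinesI {ι κ : Type*} (μ : Measure X) (α : X → ι) (β : X → κ) : Prop :=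
  ∃ h : ι → κ, ∀ᵐ x ∂μ, β x = h (α x)

/-- The join `α ∨ β` of two `ℕ`-indexed partitions, encoded via `Nat.pair`. -/
def joinN (α β : X → ℕ) : X → ℕ := fun x => Nat.pair (α x) (β x)

/-- The translated partition `gα`, with atoms `gA = {x | g⁻¹x ∈ A}` for atoms `A` of `α`. -/
def smulPart {G : Type*} [Group G] [MulAction G X] {ι : Type*} (g : G) (α : X → ι) : X → ι :=
  fun x => α (g⁻¹ • x)

/-- Join of a list of `ℕ`-indexed partitions. -/
def joinList (l : List (X → ℕ)) : X → ℕ :=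
  l.foldr (fun a r x => Nat.pair (a x) (r x)) (fun _ => 0)

/-- The join `α^F = ⋁_{g ∈ F} gα` over a finite set of group elements. -/
noncomputable def joinOver {G : Type*} [Group G] [MulAction G X] (F : Finset G) (α : X → ℕ) : X → ℕ :=
  joinList (F.toList.map (fun g => smulPart g α))

/-- The smallest `G`-invariant σ-algebra containing the partition `α`. -/
def genSA (G : Type*) [Group G] [MulAction G X] {ι : Type*} (α : X → ι) :
    MeasurableSpace X :=
  MeasurableSpace.generateFrom {s | ∃ (g : G) (i : ι), s = {x | α (g⁻¹ • x) = i}}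

/-- `α` is a generating partition: every measurable set agrees mod `μ`-null sets with a set
in the smallest `G`-invariant σ-algebra containing `α`. -/
def IsGenerating (G : Type*) [Group G] [MulAction G X] {ι : Type*} (μ : Measure X)
    (α : X → ι) : Prop :=
  ∀ s : Set X, MeasurableSet s → ∃ t : Set X, MeasurableSet[genSA G α] t ∧ μ (s ∆ t) = 0

/-- Combinatorial equivalence: `α ≤ β^L` and `β ≤ α^M` for some finite `L, M ⊆ G`. -/
def CombEquiv (G : Type*) [Group G] [MulAction G X] (μ : Measure X) (α β : X → ℕ) : Prop :=
  ∃ L M : Finset G, RefinesI μ (joinOver L β) α ∧ RefinesI μ (joinOver M α) β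

/-- `α` and `β` induce the same partition mod null sets. -/
def SamePart (μ : Measure X) (α β : X → ℕ) : Prop := RefinesI μ α β ∧ RefinesI μ β α

/-- `σ` is a simple splitting of `α`: `σ = α ∨ sβ` (as partitions, mod null sets) for some
`s ∈ S` and some coarsening `β` of `α`. -/
def SimpleSplit {G : Type*} [Group G] [MulAction G X] (μ : Measure X) (S : Finset G)
    (σ α : X → ℕ) : Prop :=
  ∃ s ∈ S, ∃ β : X → ℕ, RefinesI μ α β ∧ SamePart μ σ (joinN α (smulPart s β))

/-- `σ` is a splitting of `α`: obtained from `α` by finitely many simple splittings. -/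
def IsSplitting {G : Type*} [Group G] [MulAction G X] (μ : Measure X) (S : Finset G)
    (σ α : X → ℕ) : Prop :=
  Relation.ReflTransGen (fun a b => SimpleSplit μ S b a) α σ

/-- The ball of radius `n` about the identity for the word metric of `S`:
all products of at most `n` elements of `S`. -/
def ballF {G : Type*} [Group G] [DecidableEq G] (S : Finset G) : ℕ → Finset G
  | 0 => {1}
  | n + 1 => ballF S n ∪ (S ×ˢ ballF S n).image (fun p => p.1 * p.2)

/-- The Cayley graph of `(G,S)` (as a simple graph). -/
def cayley {G : Type*} [Group G] (S : Finset G) : SimpleGraph G :=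
  SimpleGraph.fromRel (fun g h => g⁻¹ * h ∈ S)

/-- The symmetric generating set `S = {s₁^{±1},...,s_r^{±1}}` of the rank `r` free group. -/
noncomputable def genS (r : ℕ) : Finset (FreeGroup (Fin r)) :=
  letI := Classical.decEq (FreeGroup (Fin r))
  (Finset.univ.image fun i : Fin r => FreeGroup.of i) ∪
    (Finset.univ.image fun i : Fin r => (FreeGroup.of i)⁻¹)

/-- The word-metric ball of radius `n` about `e` in the rank `r` free group. -/
noncomputable def ballFree (r : ℕ) (n : ℕ) : Finset (FreeGroup (Fin r)) :=
  letI := Classical.decEq (FreeGroup (Fin r))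
  ballF (genS r) n

/-- Bowen's functional `F(α) = (1-2r)H(α) + ∑ᵢ H(α ∨ sᵢα)`. -/
noncomputable def Ffun (r : ℕ) {X : Type*} [MeasurableSpace X]
    [MulAction (FreeGroup (Fin r)) X] (μ : Measure X) (α : X → ℕ) : ℝ :=
  (1 - 2 * (r : ℝ)) * entropy μ α +
    ∑ i : Fin r, entropy μ (joinN α (smulPart (FreeGroup.of i) α))

/-- Conditional entropy of the partition `α` relative to a sub-σ-algebra `m`:
`H(α|m) = ∫ -log μ(A_x|m)(x) dμ(x)`. -/
noncomputable def condEntropySigma (μ : Measure X) (α : X → ℕ) (m : MeasurableSpace X) : ℝ :=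
  ∫ x, -Real.log ((μ[Set.indicator (α ⁻¹' {α x}) (fun _ => (1 : ℝ))|m]) x) ∂μ

end Bowen
section Helpers

open Bowen MeasureTheory
open scoped symmDiff ENNReal

variable {X : Type*} [MeasurableSpace X]

lemma joinList_cons (a : X → ℕ) (l : List (X → ℕ)) (x : X) :
    joinList (a :: l) x = Nat.pair (a x) (joinList l x) := rfl

lemma joinList_factor {l : List (X → ℕ)} {f : X → ℕ} (hf : f ∈ l) :
    ∃ h : ℕ → ℕ, ∀ x, f x = h (joinList l x) := by
  induction l with
  | nil => exact absurd hf (List.not_mem_nil)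
  | cons a l ih =>
    rcases List.mem_cons.mp hf with h | h
    · subst h
      exact ⟨fun n => n.unpair.1, fun x => by
        simp [joinList_cons]⟩
    · obtain ⟨g, hg⟩ := ih h
      exact ⟨fun n => g n.unpair.2, fun x => by
        simp [joinList_cons]; exact hg x⟩

lemma joinList_factor_through {l : List (X → ℕ)} {k : X → ℕ}
    (H : ∀ f ∈ l, ∃ h : ℕ → ℕ, ∀ x, f x = h (k x)) :
    ∃ h : ℕ → ℕ, ∀ x, joinList l x = h (k x) := by
  induction l with
  | nil => exact ⟨fun _ => 0, fun x => rfl⟩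
  | cons a l ih =>
    obtain ⟨ha, hha⟩ := H a (List.mem_cons_self)
    obtain ⟨hl, hhl⟩ := ih fun f hf => H f (List.mem_cons_of_mem a hf)
    exact ⟨fun n => Nat.pair (ha n) (hl n), fun x => by
      simp only [joinList_cons, hha x, hhl x]⟩

lemma joinOver_factor {G : Type*} [Group G] [MulAction G X] {β : X → ℕ}
    {L L' : Finset G} (hLL : L ⊆ L') :
    ∃ h : ℕ → ℕ, ∀ x, joinOver L β x = h (joinOver L' β x) := by
  unfold joinOver
  apply joinList_factor_through
  intro f hf
  simp only [List.mem_map] at hf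
  obtain ⟨g, hg, rfl⟩ := hf
  apply joinList_factor
  simp only [List.mem_map]
  exact ⟨g, Finset.mem_toList.mpr (hLL (Finset.mem_toList.mp hg)), rfl⟩

lemma measurable_joinList {l : List (X → ℕ)} (h : ∀ f ∈ l, Measurable f) :
    Measurable (joinList l) := by
  induction l with
  | nil => exact measurable_const
  | cons a l ih =>
    have ha := h a (List.mem_cons_self)
    have hl := ih fun f hf => h f (List.mem_cons_of_mem a hf)
    exact (measurable_of_countable fun p : ℕ × ℕ => Nat.pair p.1 p.2).comp (ha.prodMk hl)

lemma measurable_joinOver {G : Type*} [Group G] [MulAction G X] {β : X → ℕ}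
    (hβ : Measurable β) (hmp : ∀ g : G, Measurable (fun x : X => g • x)) (L : Finset G) :
    Measurable (joinOver L β) := by
  apply measurable_joinList
  intro f hf
  simp only [List.mem_map] at hf
  obtain ⟨g, _, rfl⟩ := hf
  exact hβ.comp (hmp g⁻¹)

end Helpers
section Approx

open Bowen MeasureTheory Filter
open scoped symmDiff ENNReal Topology

variable {X : Type*} [MeasurableSpace X] {G : Type*} [Group G] [MulAction G X]

/-- The algebra of sets of the form `(β^L)⁻¹ S`. -/
def joinAlg (β : X → ℕ) (G : Type*) [Group G] [MulAction G X] : Set (Set X) :=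
  {C : Set X | ∃ (L : Finset G) (S : Set ℕ), C = joinOver L β ⁻¹' S}

lemma joinAlg_measurable {β : X → ℕ} (hβ : Measurable β)
    (hmg : ∀ g : G, Measurable (fun x : X => g • x)) {C : Set X}
    (hC : C ∈ joinAlg β G) : MeasurableSet C := by
  obtain ⟨L, S, rfl⟩ := hC
  exact measurable_joinOver hβ hmg L MeasurableSet.of_discrete

lemma joinAlg_compl {β : X → ℕ} {C : Set X} (hC : C ∈ joinAlg β G) :
    Cᶜ ∈ joinAlg β G := by
  obtain ⟨L, S, rfl⟩ := hC
  exact ⟨L, Sᶜ, rfl⟩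

lemma joinAlg_union {β : X → ℕ} {C₁ C₂ : Set X} (h₁ : C₁ ∈ joinAlg β G)
    (h₂ : C₂ ∈ joinAlg β G) : C₁ ∪ C₂ ∈ joinAlg β G := by
  classical
  obtain ⟨L₁, S₁, rfl⟩ := h₁
  obtain ⟨L₂, S₂, rfl⟩ := h₂
  obtain ⟨h₁, hh₁⟩ := joinOver_factor (β := β) (Finset.subset_union_left (s₁ := L₁) (s₂ := L₂))
  obtain ⟨h₂, hh₂⟩ := joinOver_factor (β := β) (Finset.subset_union_right (s₁ := L₁) (s₂ := L₂))
  refine ⟨L₁ ∪ L₂, h₁ ⁻¹' S₁ ∪ h₂ ⁻¹' S₂, ?_⟩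
  ext x
  simp [Set.mem_preimage, ← hh₁ x, ← hh₂ x]

lemma joinAlg_biUnion {β : X → ℕ} (s : Finset ℕ) (g : ℕ → Set X)
    (hg : ∀ n ∈ s, g n ∈ joinAlg β G) : (⋃ n ∈ s, g n) ∈ joinAlg β G := by
  classical
  induction s using Finset.induction_on with
  | empty => exact ⟨∅, ∅, by simp⟩
  | insert a s hni ih =>
    rw [Finset.set_biUnion_insert]
    exact joinAlg_union (hg a (Finset.mem_insert_self a s))
      (ih fun n hn => hg n (Finset.mem_insert_of_mem hn))

lemma approx_by_join (μ : Measure X) [IsProbabilityMeasure μ]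
    (hmg : ∀ g : G, Measurable (fun x : X => g • x))
    {β : X → ℕ} (hβ : Measurable β) (hgen : IsGenerating G μ β)
    {s : Set X} (hs : MeasurableSet s) {δ : ℝ≥0∞} (hδ0 : 0 < δ) (hδT : δ ≠ ⊤) :
    ∃ (L : Finset G) (S : Set ℕ), μ (s ∆ (joinOver L β ⁻¹' S)) < δ := by
  -- every `genSA`-measurable set is approximable by the algebra
  have hle : genSA G β ≤ ‹MeasurableSpace X› := by
    apply MeasurableSpace.generateFrom_le
    rintro t ⟨g, i, rfl⟩
    exact (hβ.comp (hmg g⁻¹)) (measurableSet_singleton i)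
  have key : ∀ t : Set X, MeasurableSet[genSA G β] t →
      ∀ δ : ℝ≥0∞, 0 < δ → δ ≠ ⊤ → ∃ C ∈ joinAlg β G, μ (t ∆ C) < δ := by
    intro t ht
    induction t, ht using MeasurableSpace.generateFrom_induction with
    | hC t htC _ =>
      intro δ hδ0 _
      refine ⟨t, ?_, by simp [hδ0]⟩
      obtain ⟨g, i, rfl⟩ := htC
      refine ⟨{g}, {n | n.unpair.1 = i}, ?_⟩
      ext x
      simp [joinOver, Finset.toList_singleton, joinList_cons, smulPart, joinList]
    | empty =>
      intro δ hδ0 _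
      exact ⟨∅, ⟨∅, ∅, by simp⟩, by simp [hδ0]⟩
    | compl t ht ih =>
      intro δ hδ0 hδT
      obtain ⟨C, hCD, hC⟩ := ih δ hδ0 hδT
      exact ⟨Cᶜ, joinAlg_compl hCD, by rwa [compl_symmDiff_compl]⟩
    | iUnion f hf ih =>
      intro δ hδ0 hδT
      have hfm : ∀ n, MeasurableSet (f n) := fun n => hle _ (hf n)
      have htm : MeasurableSet (⋃ i, f i) := MeasurableSet.iUnion hfm
      have hA : ∀ N : ℕ, MeasurableSet (Set.accumulate f N) := fun N =>
        MeasurableSet.biUnion (Set.to_countable _) fun b _ => hfm b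
      have h1 : Tendsto (fun N => μ (⋃ i, f i) - μ (Set.accumulate f N)) atTop (𝓝 0) := by
        have := ENNReal.Tendsto.sub (tendsto_const_nhds (x := μ (⋃ i, f i)))
          (tendsto_measure_iUnion_accumulate (f := f) (μ := μ))
          (Or.inl (measure_ne_top μ _))
        simpa using this
      have h2 : ∀ᶠ N in (atTop : Filter ℕ), μ (⋃ i, f i) - μ (Set.accumulate f N) < δ / 2 :=
        h1.eventually_lt_const (ENNReal.half_pos hδ0.ne')
      obtain ⟨N, hN⟩ := h2.exists
      have hAsub : Set.accumulate f N ⊆ ⋃ i, f i :=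
        Set.iUnion₂_subset fun i _ => Set.subset_iUnion f i
      have hdiff : μ ((⋃ i, f i) \ Set.accumulate f N) < δ / 2 := by
        rwa [measure_diff hAsub (hA N).nullMeasurableSet (measure_ne_top μ _)]
      set δ'' : ℝ≥0∞ := δ / 2 / ((N : ℝ≥0∞) + 1) with hδ''
      have hδ''0 : 0 < δ'' := ENNReal.div_pos (ENNReal.half_pos hδ0.ne').ne' (by simp)
      have hhalfT : δ / 2 ≠ ⊤ := by
        rw [div_eq_mul_inv]; exact ENNReal.mul_ne_top hδT (by simp)
      have hδ''T : δ'' ≠ ⊤ := by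
        rw [hδ'', div_eq_mul_inv]
        exact ENNReal.mul_ne_top hhalfT (ENNReal.inv_ne_top.mpr (by simp))
      have hCn : ∀ n : ℕ, ∃ C ∈ joinAlg β G, μ (f n ∆ C) < δ'' := fun n => ih n δ'' hδ''0 hδ''T
      choose Cn hCnD hCnlt using hCn
      set C : Set X := ⋃ n ∈ Finset.range (N + 1), Cn n with hCdef
      refine ⟨C, joinAlg_biUnion _ _ fun n _ => hCnD n, ?_⟩
      have hsub : (⋃ i, f i) ∆ C ⊆
          ((⋃ i, f i) \ Set.accumulate f N) ∪ ⋃ n ∈ Finset.range (N + 1), (f n ∆ Cn n) := by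
        intro x hx
        rcases Set.mem_symmDiff.mp hx with ⟨hxt, hxC⟩ | ⟨hxC, hxt⟩
        · by_cases hxA : x ∈ Set.accumulate f N
          · obtain ⟨n, hn, hxn⟩ := Set.mem_iUnion₂.mp hxA
            refine Or.inr (Set.mem_biUnion (Finset.mem_range.mpr (Nat.lt_succ_of_le hn)) ?_)
            exact Set.mem_symmDiff.mpr (Or.inl ⟨hxn, fun hc => hxC
              (Set.mem_biUnion (Finset.mem_range.mpr (Nat.lt_succ_of_le hn)) hc)⟩)
          · exact Or.inl ⟨hxt, hxA⟩
        · obtain ⟨n, hn, hxn⟩ := Set.mem_iUnion₂.mp hxC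
          refine Or.inr (Set.mem_biUnion hn ?_)
          exact Set.mem_symmDiff.mpr (Or.inr ⟨hxn, fun hc => hxt (Set.mem_iUnion.mpr ⟨n, hc⟩)⟩)
      have hsum : μ (⋃ n ∈ Finset.range (N + 1), (f n ∆ Cn n)) ≤ δ / 2 := by
        refine le_trans (measure_biUnion_finset_le _ _) ?_
        calc ∑ n ∈ Finset.range (N + 1), μ (f n ∆ Cn n)
            ≤ ∑ _n ∈ Finset.range (N + 1), δ'' :=
              Finset.sum_le_sum fun n _ => (hCnlt n).le
          _ = ((N : ℝ≥0∞) + 1) * δ'' := by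
              rw [Finset.sum_const, Finset.card_range, nsmul_eq_mul]
              push_cast
              ring
          _ ≤ δ / 2 := ENNReal.mul_div_le
      calc μ ((⋃ i, f i) ∆ C)
          ≤ μ (((⋃ i, f i) \ Set.accumulate f N) ∪ ⋃ n ∈ Finset.range (N + 1), (f n ∆ Cn n)) :=
            measure_mono hsub
        _ ≤ μ ((⋃ i, f i) \ Set.accumulate f N) + μ (⋃ n ∈ Finset.range (N + 1), (f n ∆ Cn n)) :=
            measure_union_le _ _
        _ < δ / 2 + δ / 2 := ENNReal.add_lt_add_of_lt_of_le (measure_ne_top μ _) hdiff hsum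
        _ = δ := ENNReal.add_halves δ
  obtain ⟨t, htm, hst⟩ := hgen s hs
  obtain ⟨C, hCD, hC⟩ := key t htm δ hδ0 hδT
  obtain ⟨L, S, rfl⟩ := hCD
  refine ⟨L, S, ?_⟩
  calc μ (s ∆ (joinOver L β ⁻¹' S))
      ≤ μ ((s ∆ t) ∪ (t ∆ (joinOver L β ⁻¹' S))) := measure_mono (symmDiff_triangle _ _ _)
    _ ≤ μ (s ∆ t) + μ (t ∆ (joinOver L β ⁻¹' S)) := measure_union_le _ _
    _ < δ := by rw [hst, zero_add]; exact hC

end Approx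
section Main

open Bowen MeasureTheory
open scoped symmDiff ENNReal

set_option maxHeartbeats 1000000 in
lemma atoms_almost_contained_aux {X : Type*} [MeasurableSpace X] {G : Type*} [Group G]
    [Countable G] [MulAction G X] (μ : Measure X) [IsProbabilityMeasure μ]
    (hmp : ∀ g : G, MeasurePreserving (fun x : X => g • x) μ μ)
    (α : X → ℕ) (hα : IsFinPart α)
    (β : X → ℕ) (hβ : IsFinPart β) (hgen : IsGenerating G μ β)
    (ε : ℝ) (hε : 0 < ε) (hε1 : ε < 1) :
    ∃ M : Finset G, ∀ L : Finset G, M ⊆ L →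
      ∃ (Good : Set ℕ) (f : ℕ → ℕ),
        (∀ i ∈ Good, f i ∈ Set.range α ∧
          (1 - ENNReal.ofReal ε) * μ ((joinOver L β) ⁻¹' {i}) ≤
            μ ((joinOver L β) ⁻¹' {i} ∩ α ⁻¹' {f i})) ∧
        μ {x | joinOver L β x ∉ Good} < ENNReal.ofReal ε := by
  classical
  have hXne : Nonempty X := by
    by_contra h
    rw [not_nonempty_iff] at h
    have h1 : μ Set.univ = 1 := measure_univ
    rw [Set.univ_eq_empty_iff.mpr h, measure_empty] at h1
    exact zero_ne_one h1
  have hmg : ∀ g : G, Measurable (fun x : X => g • x) := fun g => (hmp g).measurable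
  set Rα : Finset ℕ := hα.2.toFinset with hRα
  have hmemR : ∀ a : ℕ, a ∈ Rα ↔ a ∈ Set.range α := fun a => Set.Finite.mem_toFinset _
  have hRne : Rα.Nonempty := ⟨α (Classical.arbitrary X), (hmemR _).mpr ⟨_, rfl⟩⟩
  set e : ℝ≥0∞ := ENNReal.ofReal ε with he
  have he0 : e ≠ 0 := (ENNReal.ofReal_pos.mpr hε).ne'
  have heT : e ≠ ⊤ := ENNReal.ofReal_ne_top
  have he1 : e ≤ 1 := ENNReal.ofReal_le_one.mpr hε1.le
  set δ' : ℝ≥0∞ := e * e / ((Rα.card : ℝ≥0∞) + 1) with hδ'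
  have hcard0 : ((Rα.card : ℝ≥0∞) + 1) ≠ 0 := by simp
  have hcardT : ((Rα.card : ℝ≥0∞) + 1) ≠ ⊤ := by simp
  have hδ'0 : 0 < δ' := ENNReal.div_pos (mul_ne_zero he0 he0) hcardT
  have hδ'T : δ' ≠ ⊤ := by
    rw [hδ', div_eq_mul_inv]
    exact ENNReal.mul_ne_top (ENNReal.mul_ne_top heT heT) (ENNReal.inv_ne_top.mpr hcard0)
  have happrox : ∀ a : ℕ, ∃ (L : Finset G) (S : Set ℕ),
      μ ((α ⁻¹' {a}) ∆ (joinOver L β ⁻¹' S)) < δ' := fun a =>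
    approx_by_join μ hmg hβ.1 hgen (hα.1 (measurableSet_singleton a)) hδ'0 hδ'T
  choose Lf Sf hLS using happrox
  refine ⟨Rα.sup Lf, fun L hML => ?_⟩
  set J : X → ℕ := joinOver L β with hJdef
  have hJ : Measurable J := measurable_joinOver hβ.1 hmg L
  have hfac : ∀ a ∈ Rα, ∃ h : ℕ → ℕ, ∀ x, joinOver (Lf a) β x = h (J x) := fun a ha =>
    joinOver_factor ((Finset.le_sup ha).trans hML)
  choose! hfun hfc using hfac
  set T : ℕ → Set ℕ := fun a => hfun a ⁻¹' Sf a with hT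
  set C : ℕ → Set X := fun a => J ⁻¹' T a with hC
  have hCmeas : ∀ a, MeasurableSet (C a) := fun a => hJ MeasurableSet.of_discrete
  have hCa : ∀ a ∈ Rα, C a = joinOver (Lf a) β ⁻¹' Sf a := by
    intro a ha
    ext x
    simp only [hC, hT, Set.mem_preimage, hfc a ha x]
  have hCsmall : ∀ a ∈ Rα, μ ((α ⁻¹' {a}) ∆ C a) < δ' := fun a ha => by
    rw [hCa a ha]; exact hLS a
  set Good : Set ℕ := {i : ℕ | ∃ a, a ∈ Set.range α ∧
    (1 - e) * μ (J ⁻¹' {i}) ≤ μ (J ⁻¹' {i} ∩ α ⁻¹' {a})} with hGood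
  set f : ℕ → ℕ := fun i => if h : i ∈ Good then h.choose else 0 with hf
  refine ⟨Good, f, ?_, ?_⟩
  · intro i hi
    have hspec := hi.choose_spec
    simp only [hf, dif_pos hi]
    exact ⟨hspec.1, hspec.2⟩
  · -- the bad part is small
    have key : ∀ i ∉ Good, e * μ (J ⁻¹' {i}) ≤
        ∑ a ∈ Rα, μ (J ⁻¹' {i} ∩ ((α ⁻¹' {a}) ∆ C a)) := by
      intro i hi
      by_cases hcase : ∃ a ∈ Rα, i ∈ T a
      · obtain ⟨a, haR, hiT⟩ := hcase
        have haRange : a ∈ Set.range α := (hmemR a).mp haR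
        have hBC : J ⁻¹' {i} ⊆ C a := by
          intro x hx
          have hxi : J x = i := hx
          simp only [hC, Set.mem_preimage, hxi]
          exact hiT
        have hlt : μ (J ⁻¹' {i} ∩ α ⁻¹' {a}) < (1 - e) * μ (J ⁻¹' {i}) := by
          by_contra hle
          exact hi ⟨a, haRange, le_of_not_gt hle⟩
        have hsplit : μ (J ⁻¹' {i} ∩ α ⁻¹' {a}) + μ (J ⁻¹' {i} \ α ⁻¹' {a}) = μ (J ⁻¹' {i}) :=
          measure_inter_add_diff _ (hα.1 (measurableSet_singleton a))
        have hfin : (1 - e) * μ (J ⁻¹' {i}) ≠ ⊤ :=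
          ENNReal.mul_ne_top (ne_top_of_le_ne_top ENNReal.one_ne_top tsub_le_self)
            (measure_ne_top μ _)
        have h1 : (1 - e) * μ (J ⁻¹' {i}) + e * μ (J ⁻¹' {i}) = μ (J ⁻¹' {i}) := by
          rw [← add_mul, tsub_add_cancel_of_le he1, one_mul]
        have h2 : (1 - e) * μ (J ⁻¹' {i}) + e * μ (J ⁻¹' {i}) <
            (1 - e) * μ (J ⁻¹' {i}) + μ (J ⁻¹' {i} \ α ⁻¹' {a}) := by
          calc (1 - e) * μ (J ⁻¹' {i}) + e * μ (J ⁻¹' {i}) = μ (J ⁻¹' {i}) := h1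
            _ = μ (J ⁻¹' {i} ∩ α ⁻¹' {a}) + μ (J ⁻¹' {i} \ α ⁻¹' {a}) := hsplit.symm
            _ < (1 - e) * μ (J ⁻¹' {i}) + μ (J ⁻¹' {i} \ α ⁻¹' {a}) :=
              ENNReal.add_lt_add_right (measure_ne_top μ _) hlt
        have h3 : e * μ (J ⁻¹' {i}) ≤ μ (J ⁻¹' {i} \ α ⁻¹' {a}) :=
          ((ENNReal.add_lt_add_iff_left hfin).mp h2).le
        have hsub2 : J ⁻¹' {i} \ α ⁻¹' {a} ⊆ J ⁻¹' {i} ∩ ((α ⁻¹' {a}) ∆ C a) := fun x hx =>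
          ⟨hx.1, Set.mem_symmDiff.mpr (Or.inr ⟨hBC hx.1, hx.2⟩)⟩
        exact h3.trans ((measure_mono hsub2).trans
          (Finset.single_le_sum (f := fun a => μ (J ⁻¹' {i} ∩ ((α ⁻¹' {a}) ∆ C a)))
            (fun _ _ => zero_le) haR))
      · push_neg at hcase
        have hBsub : J ⁻¹' {i} ⊆ ⋃ a ∈ Rα, (J ⁻¹' {i} ∩ ((α ⁻¹' {a}) ∆ C a)) := by
          intro x hx
          have hxi : J x = i := hx
          have haR : α x ∈ Rα := (hmemR _).mpr ⟨x, rfl⟩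
          have hxC : x ∉ C (α x) := by
            intro hxc
            rw [hC] at hxc
            simp only [Set.mem_preimage, hxi] at hxc
            exact hcase _ haR hxc
          exact Set.mem_biUnion haR ⟨hx, Set.mem_symmDiff.mpr (Or.inl ⟨rfl, hxC⟩)⟩
        calc e * μ (J ⁻¹' {i}) ≤ 1 * μ (J ⁻¹' {i}) := mul_le_mul_left he1 _
          _ = μ (J ⁻¹' {i}) := one_mul _
          _ ≤ μ (⋃ a ∈ Rα, (J ⁻¹' {i} ∩ ((α ⁻¹' {a}) ∆ C a))) := measure_mono hBsub
          _ ≤ ∑ a ∈ Rα, μ (J ⁻¹' {i} ∩ ((α ⁻¹' {a}) ∆ C a)) := measure_biUnion_finset_le _ _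
    have hbadeq : {x | J x ∉ Good} = ⋃ i ∈ Goodᶜ, J ⁻¹' {i} := by
      ext x
      simp only [Set.mem_setOf_eq, Set.mem_iUnion, Set.mem_compl_iff, Set.mem_preimage,
        Set.mem_singleton_iff]
      exact ⟨fun h => ⟨J x, h, rfl⟩, fun ⟨i, hi, hx⟩ => hx ▸ hi⟩
    have hdisj : (Goodᶜ : Set ℕ).PairwiseDisjoint (fun i => J ⁻¹' {i}) := by
      intro i _ j _ hij
      apply Set.disjoint_left.mpr
      intro x h1 h2
      exact hij ((Set.mem_singleton_iff.mp h1) ▸ (Set.mem_singleton_iff.mp h2) ▸ rfl)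
    have hmeasBad : μ {x | J x ∉ Good} = ∑' i : ↥(Goodᶜ), μ (J ⁻¹' {(i : ℕ)}) := by
      rw [hbadeq]
      exact measure_biUnion (Set.to_countable _) hdisj
        (fun i _ => hJ (measurableSet_singleton i))
    have hDmeas : ∀ a, MeasurableSet ((α ⁻¹' {a}) ∆ C a) := fun a =>
      (hα.1 (measurableSet_singleton a)).symmDiff (hCmeas a)
    have h4 : e * μ {x | J x ∉ Good} ≤ ∑ a ∈ Rα, μ ((α ⁻¹' {a}) ∆ C a) := by
      rw [hmeasBad, ← ENNReal.tsum_mul_left]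
      calc ∑' i : ↥(Goodᶜ), e * μ (J ⁻¹' {(i : ℕ)})
          ≤ ∑' i : ↥(Goodᶜ), ∑ a ∈ Rα, μ (J ⁻¹' {(i : ℕ)} ∩ ((α ⁻¹' {a}) ∆ C a)) :=
            ENNReal.tsum_le_tsum fun i => key i i.2
        _ = ∑ a ∈ Rα, ∑' i : ↥(Goodᶜ), μ (J ⁻¹' {(i : ℕ)} ∩ ((α ⁻¹' {a}) ∆ C a)) :=
            Summable.tsum_finsetSum fun a _ => ENNReal.summable
        _ ≤ ∑ a ∈ Rα, μ ((α ⁻¹' {a}) ∆ C a) := by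
            refine Finset.sum_le_sum fun a ha => ?_
            have hdisj2 : (Goodᶜ : Set ℕ).PairwiseDisjoint
                (fun i => J ⁻¹' {i} ∩ ((α ⁻¹' {a}) ∆ C a)) := fun i hi j hj hij =>
              (hdisj hi hj hij).mono Set.inter_subset_left Set.inter_subset_left
            have h6 : ∑' i : ↥(Goodᶜ), μ (J ⁻¹' {(i : ℕ)} ∩ ((α ⁻¹' {a}) ∆ C a)) =
                μ (⋃ i ∈ Goodᶜ, (J ⁻¹' {i} ∩ ((α ⁻¹' {a}) ∆ C a))) :=
              (measure_biUnion (Set.to_countable _) hdisj2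
                (fun i _ => (hJ (measurableSet_singleton i)).inter (hDmeas a))).symm
            rw [h6]
            exact measure_mono (Set.iUnion₂_subset fun i _ => Set.inter_subset_right)
    have h5 : ∑ a ∈ Rα, μ ((α ⁻¹' {a}) ∆ C a) < e * e := by
      calc ∑ a ∈ Rα, μ ((α ⁻¹' {a}) ∆ C a) ≤ ∑ _a ∈ Rα, δ' :=
            Finset.sum_le_sum (fun a ha => (hCsmall a ha).le)
        _ = (Rα.card : ℝ≥0∞) * δ' := by rw [Finset.sum_const, nsmul_eq_mul]
        _ < ((Rα.card : ℝ≥0∞) + 1) * δ' := by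
            rw [ENNReal.mul_lt_mul_iff_left hδ'0.ne' hδ'T]
            exact ENNReal.lt_add_right (ENNReal.natCast_ne_top _) one_ne_zero
        _ = e * e := ENNReal.mul_div_cancel hcard0 hcardT
    exact (ENNReal.mul_lt_mul_iff_right he0 heT).mp (lt_of_le_of_lt h4 h5)

end Main
open Bowen

/-- Lemma 3.2: if `β` is generating, then for every `ε > 0` there is a
finite `M ⊆ G` such that for every finite `L ⊇ M` the atoms of `β^L` split into a "good"
collection, each of whose members is `(1-ε)`-proportionally contained in a single atom of
`α`, and a remainder of total measure `< ε`. -/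
theorem atoms_almost_contained {X : Type*} [MeasurableSpace X] {G : Type*} [Group G]
    [Countable G] [MulAction G X] (μ : Measure X) [IsProbabilityMeasure μ]
    (hmp : ∀ g : G, MeasurePreserving (fun x : X => g • x) μ μ)
    (α : X → ℕ) (hα : IsFinPart α)
    (β : X → ℕ) (hβ : IsFinPart β) (hgen : IsGenerating G μ β)
    (ε : ℝ) (hε : 0 < ε) :
    ∃ M : Finset G, ∀ L : Finset G, M ⊆ L →
      ∃ (Good : Set ℕ) (f : ℕ → ℕ),
        (∀ i ∈ Good, f i ∈ Set.range α ∧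
          (1 - ENNReal.ofReal ε) * μ ((joinOver L β) ⁻¹' {i}) ≤
            μ ((joinOver L β) ⁻¹' {i} ∩ α ⁻¹' {f i})) ∧
        μ {x | joinOver L β x ∉ Good} < ENNReal.ofReal ε := by
  set ε' : ℝ := min ε (1 / 2) with hε'
  have hε'0 : 0 < ε' := lt_min hε (by norm_num)
  have hε'1 : ε' < 1 := lt_of_le_of_lt (min_le_right _ _) (by norm_num)
  have hε'le : ε' ≤ ε := min_le_left _ _
  obtain ⟨M, hM⟩ := atoms_almost_contained_aux μ hmp α hα β hβ hgen ε' hε'0 hε'1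
  refine ⟨M, fun L hL => ?_⟩
  obtain ⟨Good, f, h1, h2⟩ := hM L hL
  refine ⟨Good, f, fun i hi => ⟨(h1 i hi).1, ?_⟩,
    lt_of_lt_of_le h2 (ENNReal.ofReal_le_ofReal hε'le)⟩
  refine le_trans ?_ (h1 i hi).2
  exact mul_le_mul_left
    (tsub_le_tsub_left (ENNReal.ofReal_le_ofReal hε'le) 1) _
end
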